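/- (S_n-Conjugation Lemma) Let n ≥ 5 and let g ∈ ni(A_n, C_{3^r}) have the form g = ((h, h^{-1}) repeated u times, g') for some u ≥ 1, where h = (i j k) is a 3-cycle and neither j nor k lies in the support of any entry of the tuple g'. Then for every γ in the symmetric group S_n, the tuple g is braid equivalent to its entrywise conjugate γ g γ^{-1} = (γ g_1 γ^{-1},…, γ g_r γ^{-1}). -/

import Mathlib

/-- Elementary braid move: replace adjacent entries `(a, b)` by `(a * b * a⁻¹, a)`. -/
def BraidMove {G : Type*} [Group G] (x y : List G) : Prop :=
  ∃ (l₁ l₂ : List G) (a b : G),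
    x = l₁ ++ a :: b :: l₂ ∧ y = l₁ ++ (a * b * a⁻¹) :: a :: l₂

/-- Braid equivalence: the equivalence relation generated by elementary braid moves. -/
def BraidEquiv {G : Type*} [Group G] : List G → List G → Prop :=
  Relation.EqvGen BraidMove

/-- The Nielsen class `ni(A_n, C_{3^r})`: `r`-tuples of 3-cycles in the alternating
group `A_n` with product 1 whose entries generate `A_n`. -/
def NielsenA (n r : ℕ) (l : List (Equiv.Perm (Fin n))) : Prop :=
  l.length = r ∧ (∀ σ ∈ l, σ.IsThreeCycle) ∧ l.prod = 1 ∧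
    Subgroup.closure {σ | σ ∈ l} = alternatingGroup (Fin n)

section BraidLemmas

variable {G : Type*} [Group G]

lemma BraidMove.cons (x : G) {l m : List G} (h : BraidMove l m) : BraidMove (x :: l) (x :: m) := by
  obtain ⟨l₁, l₂, a, b, h1, h2⟩ := h
  exact ⟨x :: l₁, l₂, a, b, by simp [h1], by simp [h2]⟩

lemma braidEquiv_cons (x : G) {l m : List G} (h : BraidEquiv l m) :
    BraidEquiv (x :: l) (x :: m) := by
  induction h with
  | rel _ _ h => exact Relation.EqvGen.rel _ _ (h.cons x)
  | refl _ => exact Relation.EqvGen.refl _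
  | symm _ _ _ ih => exact Relation.EqvGen.symm _ _ ih
  | trans _ _ _ _ _ ih1 ih2 => exact Relation.EqvGen.trans _ _ _ ih1 ih2

lemma braidEquiv_conj (c : G) {l m : List G} (h : BraidEquiv l m) :
    BraidEquiv (l.map (fun x => c * x * c⁻¹)) (m.map (fun x => c * x * c⁻¹)) := by
  induction h with
  | rel x y h =>
    obtain ⟨l₁, l₂, a, b, h1, h2⟩ := h
    refine Relation.EqvGen.rel _ _
      ⟨l₁.map (fun x => c * x * c⁻¹), l₂.map (fun x => c * x * c⁻¹),
        c * a * c⁻¹, c * b * c⁻¹, by simp [h1], ?_⟩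
    have key : c * a * c⁻¹ * (c * b * c⁻¹) * (c * a * c⁻¹)⁻¹ = c * (a * b * a⁻¹) * c⁻¹ := by
      group
    simp only [h2, List.map_append, List.map_cons]
    rw [key]
  | refl _ => exact Relation.EqvGen.refl _
  | symm _ _ _ ih => exact Relation.EqvGen.symm _ _ ih
  | trans _ _ _ _ _ ih1 ih2 => exact Relation.EqvGen.trans _ _ _ ih1 ih2

lemma braidEquiv_prod {l m : List G} (h : BraidEquiv l m) : l.prod = m.prod := by
  induction h with
  | rel x y h =>
    obtain ⟨l₁, l₂, a, b, h1, h2⟩ := h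
    simp [h1, h2, mul_assoc]
  | refl _ => rfl
  | symm _ _ _ ih => exact ih.symm
  | trans _ _ _ _ _ ih1 ih2 => exact ih1.trans ih2

/-- Rotate the head to the back, conjugating everything by it. -/
lemma braidEquiv_rot (a : G) (t : List G) :
    BraidEquiv (a :: t) ((t ++ [a]).map (fun x => a * x * a⁻¹)) := by
  induction t with
  | nil => simpa [BraidEquiv] using Relation.EqvGen.refl ([a] : List G)
  | cons x t ih =>
    have m1 : BraidMove (a :: x :: t) ((a * x * a⁻¹) :: a :: t) := ⟨[], t, a, x, rfl, rfl⟩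
    refine Relation.EqvGen.trans _ _ _ (Relation.EqvGen.rel _ _ m1) ?_
    simpa [BraidEquiv] using braidEquiv_cons (a * x * a⁻¹) ih

/-- The full twist: a tuple is braid equivalent to its conjugate by its product. -/
lemma braidEquiv_fullTwist (m : List G) :
    BraidEquiv m (m.map (fun x => m.prod * x * m.prod⁻¹)) := by
  have key : ∀ k, k ≤ m.length →
      BraidEquiv m ((m.rotate k).map (fun x => (m.take k).prod * x * (m.take k).prod⁻¹)) := by
    intro k hk
    induction k with
    | zero => simpa [BraidEquiv] using Relation.EqvGen.refl m
    | succ k ih =>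
      have hk' : k < m.length := hk
      have ihe := ih (le_of_lt hk')
      have hrot : m.rotate k = m[k] :: (m.drop (k + 1) ++ m.take k) := by
        rw [List.rotate_eq_drop_append_take (le_of_lt hk'), List.drop_eq_getElem_cons hk']
        rfl
      have hrot' : ((m.drop (k + 1) ++ m.take k) ++ [m[k]]) = m.rotate (k + 1) := by
        rw [List.rotate_eq_drop_append_take hk, List.append_assoc]
        congr 1
        rw [List.take_succ, List.getElem?_eq_getElem hk']
        rfl
      have step : BraidEquiv (m.rotate k)
          ((m.rotate (k + 1)).map (fun x => m[k] * x * m[k]⁻¹)) := by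
        rw [hrot, ← hrot']
        exact braidEquiv_rot _ _
      have step2 := braidEquiv_conj ((m.take k).prod) step
      have heq : (((m.rotate (k + 1)).map (fun x => m[k] * x * m[k]⁻¹)).map
            (fun x => (m.take k).prod * x * (m.take k).prod⁻¹)) =
          (m.rotate (k + 1)).map
            (fun x => (m.take (k + 1)).prod * x * (m.take (k + 1)).prod⁻¹) := by
        rw [List.map_map]
        refine List.map_congr_left fun x _ => ?_
        simp only [Function.comp_apply, List.prod_take_succ m k hk', mul_inv_rev, mul_assoc]
      rw [heq] at step2
      exact Relation.EqvGen.trans _ _ _ ihe step2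
  have := key m.length le_rfl
  simpa using this

/-- A tuple is braid equivalent to its conjugate by the inverse of its product. -/
lemma braidEquiv_fullTwist_inv (m : List G) :
    BraidEquiv m (m.map (fun x => m.prod⁻¹ * x * m.prod⁻¹⁻¹)) := by
  have h1 := braidEquiv_conj m.prod⁻¹ (braidEquiv_fullTwist m)
  have heq : ((m.map (fun x => m.prod * x * m.prod⁻¹)).map
      (fun x => m.prod⁻¹ * x * m.prod⁻¹⁻¹)) = m := by
    rw [List.map_map]
    refine (List.map_congr_left fun x _ => ?_).trans (List.map_id m)
    simp [mul_assoc]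
  rw [heq] at h1
  exact Relation.EqvGen.symm _ _ h1

lemma braidEquiv_cons_conj_tail (a : G) (t : List G) (h : a * t.prod = 1) :
    BraidEquiv (a :: t) (a :: t.map (fun x => a * x * a⁻¹)) := by
  have hp : t.prod = a⁻¹ := by
    rw [← one_mul t.prod, ← inv_mul_cancel a, mul_assoc, h, mul_one]
  have := braidEquiv_fullTwist_inv t
  rw [hp, inv_inv] at this
  exact braidEquiv_cons a this

/-- Move an element to the front, conjugating what it passes by its inverse. -/
lemma braidEquiv_move_left (g : G) (l₁ X : List G) :
    BraidEquiv (l₁ ++ g :: X) (g :: (l₁.map (fun x => g⁻¹ * x * g) ++ X)) := by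
  induction l₁ with
  | nil => exact Relation.EqvGen.refl _
  | cons x t ih =>
    refine Relation.EqvGen.trans _ _ _ (braidEquiv_cons x ih) ?_
    have m1 : BraidMove (g :: (g⁻¹ * x * g) :: (t.map (fun y => g⁻¹ * y * g) ++ X))
        (x :: g :: (t.map (fun y => g⁻¹ * y * g) ++ X)) := by
      refine ⟨[], t.map (fun y => g⁻¹ * y * g) ++ X, g, g⁻¹ * x * g, rfl, ?_⟩
      have : g * (g⁻¹ * x * g) * g⁻¹ = x := by group
      rw [this]
      rfl
    exact Relation.EqvGen.symm _ _ (Relation.EqvGen.rel _ _ m1)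

/-- Move an element to the back of a segment, conjugating what it passes by itself. -/
lemma braidEquiv_move_right (g : G) (l₁ X : List G) :
    BraidEquiv (g :: (l₁ ++ X)) (l₁.map (fun x => g * x * g⁻¹) ++ g :: X) := by
  induction l₁ with
  | nil => exact Relation.EqvGen.refl _
  | cons x t ih =>
    have m1 : BraidMove (g :: x :: (t ++ X)) ((g * x * g⁻¹) :: g :: (t ++ X)) :=
      ⟨[], t ++ X, g, x, rfl, rfl⟩
    refine Relation.EqvGen.trans _ _ _ (Relation.EqvGen.rel _ _ m1) ?_
    exact braidEquiv_cons _ ih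

/-- For a product-one tuple, conjugation by any entry is realized by braids. -/
lemma braidEquiv_conj_of_mem {l : List G} (hprod : l.prod = 1) {g : G} (hg : g ∈ l) :
    BraidEquiv l (l.map (fun x => g * x * g⁻¹)) := by
  obtain ⟨l₁, l₂, rfl⟩ := List.append_of_mem hg
  have s1 := braidEquiv_move_left g l₁ l₂
  have hp : g * (l₁.map (fun x => g⁻¹ * x * g) ++ l₂).prod = 1 := by
    have := braidEquiv_prod s1
    rw [hprod] at this
    rw [List.prod_cons] at this
    exact this.symm
  have s2 := braidEquiv_cons_conj_tail g _ hp
  have heq : ((l₁.map (fun x => g⁻¹ * x * g) ++ l₂).map (fun x => g * x * g⁻¹)) =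
      l₁ ++ l₂.map (fun x => g * x * g⁻¹) := by
    rw [List.map_append, List.map_map]
    congr 1
    refine (List.map_congr_left fun x _ => ?_).trans (List.map_id l₁)
    simp [mul_assoc]
  rw [heq] at s2
  have s3 := braidEquiv_move_right g l₁ (l₂.map (fun x => g * x * g⁻¹))
  have final : (l₁.map (fun x => g * x * g⁻¹) ++ g :: l₂.map (fun x => g * x * g⁻¹)) =
      ((l₁ ++ g :: l₂).map (fun x => g * x * g⁻¹)) := by
    simp [mul_assoc]
  rw [final] at s3
  exact Relation.EqvGen.trans _ _ _ s1 (Relation.EqvGen.trans _ _ _ s2 s3)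

/-- For a product-one tuple, conjugation by any element of the subgroup generated
by the entries is realized by braids. -/
lemma braidEquiv_conj_of_mem_closure {l : List G} (hprod : l.prod = 1) {c : G}
    (hc : c ∈ Subgroup.closure {σ | σ ∈ l}) :
    BraidEquiv l (l.map (fun x => c * x * c⁻¹)) := by
  induction hc using Subgroup.closure_induction with
  | mem g hg => exact braidEquiv_conj_of_mem hprod hg
  | one => simpa [BraidEquiv] using Relation.EqvGen.refl l
  | mul c d _ _ ihc ihd =>
    have h2 := braidEquiv_conj c ihd
    have heq : ((l.map (fun x => d * x * d⁻¹)).map (fun x => c * x * c⁻¹)) =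
        l.map (fun x => (c * d) * x * (c * d)⁻¹) := by
      rw [List.map_map]
      refine List.map_congr_left fun x _ => ?_
      simp [mul_assoc]
    rw [heq] at h2
    exact Relation.EqvGen.trans _ _ _ ihc h2
  | inv c _ ihc =>
    have h2 := braidEquiv_conj c⁻¹ ihc
    have heq : ((l.map (fun x => c * x * c⁻¹)).map (fun x => c⁻¹ * x * c⁻¹⁻¹)) = l := by
      rw [List.map_map]
      refine (List.map_congr_left fun x _ => ?_).trans (List.map_id l)
      simp [mul_assoc]
    rw [heq] at h2
    exact Relation.EqvGen.symm _ _ h2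

/-- Swapping each pair `(h, h⁻¹)` to `(h⁻¹, h)` is realized by braids. -/
lemma braidEquiv_pairs_swap (u : ℕ) (h : G) (X : List G) :
    BraidEquiv ((List.replicate u [h, h⁻¹]).flatten ++ X)
      ((List.replicate u [h⁻¹, h]).flatten ++ X) := by
  induction u with
  | zero => exact Relation.EqvGen.refl _
  | succ u ih =>
    simp only [List.replicate_succ, List.flatten_cons, List.cons_append, List.append_assoc]
    have m1 : BraidMove (h⁻¹ :: h :: ((List.replicate u [h⁻¹, h]).flatten ++ X))
        (h :: h⁻¹ :: ((List.replicate u [h⁻¹, h]).flatten ++ X)) := by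
      refine ⟨[], (List.replicate u [h⁻¹, h]).flatten ++ X, h⁻¹, h, rfl, ?_⟩
      have : h⁻¹ * h * h⁻¹⁻¹ = h := by group
      rw [this]
      rfl
    refine Relation.EqvGen.trans _ _ _ ?_ (Relation.EqvGen.symm _ _ (Relation.EqvGen.rel _ _ m1))
    exact braidEquiv_cons h (braidEquiv_cons h⁻¹ (by simpa using ih))

end BraidLemmas

section PermLemmas

open Equiv Equiv.Perm

/-- Conjugating a 3-cycle by the transposition of two of its support points inverts it. -/
lemma swap_conj_threeCycle {n : ℕ} {h : Equiv.Perm (Fin n)} (hh : h.IsThreeCycle)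
    {j k : Fin n} (hjk : j ≠ k) (hjs : j ∈ h.support) (hks : k ∈ h.support) :
    Equiv.swap j k * h * Equiv.swap j k = h⁻¹ := by
  have h3 : h ^ 3 = 1 := by
    rw [← hh.orderOf]
    exact pow_orderOf_eq_one h
  have h3' : ∀ x, h (h (h x)) = x := by
    intro x
    have : (h ^ 3) x = x := by rw [h3]; rfl
    simpa [mul_apply, pow_succ] using this
  obtain ⟨b, hhj⟩ : ∃ b, h j = b := ⟨h j, rfl⟩
  obtain ⟨c, hhb⟩ : ∃ c, h b = c := ⟨h b, rfl⟩
  have hhc : h c = j := by rw [← hhb, ← hhj]; exact h3' j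
  have hbj : b ≠ j := hhj ▸ mem_support.mp hjs
  have hbs : b ∈ h.support := hhj ▸ apply_mem_support.mpr hjs
  have hcb : c ≠ b := hhb ▸ mem_support.mp hbs
  have hcs : c ∈ h.support := hhb ▸ apply_mem_support.mpr hbs
  have hcj : c ≠ j := by
    intro e
    rw [e] at hhc
    exact (mem_support.mp hjs) hhc
  have hsupport : h.support = {j, b, c} := by
    have hcard : ({j, b, c} : Finset (Fin n)).card = 3 := by
      rw [Finset.card_insert_of_notMem (by simp [Ne.symm hbj, Ne.symm hcj]),
        Finset.card_insert_of_notMem (by simp [Ne.symm hcb])]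
      rfl
    refine (Finset.eq_of_subset_of_card_le ?_ ?_).symm
    · intro x hx
      simp only [Finset.mem_insert, Finset.mem_singleton] at hx
      rcases hx with rfl | rfl | rfl
      · exact hjs
      · exact hbs
      · exact hcs
    · rw [hh.card_support, hcard]
  have hk' : k = b ∨ k = c := by
    have : k ∈ ({j, b, c} : Finset (Fin n)) := hsupport ▸ hks
    simp only [Finset.mem_insert, Finset.mem_singleton] at this
    rcases this with rfl | rfl | rfl
    · exact absurd rfl hjk
    · exact Or.inl rfl
    · exact Or.inr rfl
  have hfix : ∀ x, x ≠ j → x ≠ b → x ≠ c → h x = x := by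
    intro x h1 h2 h3
    by_contra hmove
    have : x ∈ h.support := mem_support.mpr hmove
    rw [hsupport] at this
    simp only [Finset.mem_insert, Finset.mem_singleton] at this
    tauto
  have key : ∀ x, h (Equiv.swap j k (h (Equiv.swap j k x))) = x := by
    intro x
    rcases hk' with rfl | rfl
    · -- k = b
      by_cases hxj : x = j
      · subst hxj
        rw [swap_apply_left, hhb, swap_apply_of_ne_of_ne hcj hcb, hhc]
      by_cases hxk : x = k
      · subst hxk
        rw [swap_apply_right, hhj, swap_apply_right, hhj]
      by_cases hxc : x = c
      · subst hxc
        rw [swap_apply_of_ne_of_ne hcj hcb, hhc, swap_apply_left, hhb]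
      · rw [swap_apply_of_ne_of_ne hxj hxk, hfix x hxj hxk hxc,
          swap_apply_of_ne_of_ne hxj hxk, hfix x hxj hxk hxc]
    · -- k = c
      by_cases hxj : x = j
      · subst hxj
        rw [swap_apply_left, hhc, swap_apply_left, hhc]
      by_cases hxb : x = b
      · subst hxb
        rw [swap_apply_of_ne_of_ne hbj (Ne.symm hcb), hhb, swap_apply_right, hhj]
      by_cases hxk : x = k
      · subst hxk
        rw [swap_apply_right, hhj, swap_apply_of_ne_of_ne hbj (Ne.symm hcb), hhb]
      · rw [swap_apply_of_ne_of_ne hxj hxk, hfix x hxj hxb hxk,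
          swap_apply_of_ne_of_ne hxj hxk, hfix x hxj hxb hxk]
  have hmain : h * (Equiv.swap j k * h * Equiv.swap j k) = 1 := by
    apply Equiv.ext
    intro x
    simpa [Equiv.Perm.mul_apply] using key x
  calc Equiv.swap j k * h * Equiv.swap j k
      = h⁻¹ * (h * (Equiv.swap j k * h * Equiv.swap j k)) := by group
    _ = h⁻¹ := by rw [hmain, mul_one]

/-- A permutation whose support avoids `j` and `k` commutes with `swap j k`. -/
lemma swap_conj_of_not_mem_support {n : ℕ} {σ : Equiv.Perm (Fin n)} {j k : Fin n}
    (hj : j ∉ σ.support) (hk : k ∉ σ.support) :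
    Equiv.swap j k * σ * Equiv.swap j k = σ := by
  have hdisj : σ.Disjoint (Equiv.swap j k) := by
    intro x
    by_cases hxj : x = j
    · subst hxj; exact Or.inl (Equiv.Perm.notMem_support.mp hj)
    by_cases hxk : x = k
    · subst hxk; exact Or.inl (Equiv.Perm.notMem_support.mp hk)
    · exact Or.inr (Equiv.swap_apply_of_ne_of_ne hxj hxk)
  have hcomm : Commute σ (Equiv.swap j k) := hdisj.commute
  calc Equiv.swap j k * σ * Equiv.swap j k
      = Equiv.swap j k * (σ * Equiv.swap j k) := by rw [mul_assoc]
    _ = Equiv.swap j k * (Equiv.swap j k * σ) := by rw [hcomm.eq]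
    _ = σ := by rw [← mul_assoc, Equiv.swap_mul_self, one_mul]

end PermLemmas

/-- **Sₙ-Conjugation Lemma.** Let `n ≥ 5` and suppose `g ∈ ni(A_n, C_{3^r})` has the
form `((h, h⁻¹)` repeated `u` times`, g')`, where `h` is a 3-cycle and two distinct
points `j, k` of the support of `h` lie outside the support of every entry of `g'`.
Then for every `γ ∈ S_n`, `g` is braid equivalent to its entrywise conjugate by `γ`. -/
theorem sn_conjugation_lemma (n r u : ℕ) (hn : 5 ≤ n) (hu : 1 ≤ u)
    (h : Equiv.Perm (Fin n)) (hh : h.IsThreeCycle)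
    (j k : Fin n) (hjk : j ≠ k) (hjs : j ∈ h.support) (hks : k ∈ h.support)
    (g' : List (Equiv.Perm (Fin n)))
    (havoid : ∀ σ ∈ g', j ∉ σ.support ∧ k ∉ σ.support)
    (hg : NielsenA n r ((List.replicate u [h, h⁻¹]).flatten ++ g')) :
    ∀ γ : Equiv.Perm (Fin n),
      BraidEquiv ((List.replicate u [h, h⁻¹]).flatten ++ g')
        (((List.replicate u [h, h⁻¹]).flatten ++ g').map (fun x => γ * x * γ⁻¹)) := by
  intro γ
  obtain ⟨hlen, h3cyc, hprod, hclos⟩ := hg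
  set L := (List.replicate u [h, h⁻¹]).flatten ++ g' with hL
  set τ := Equiv.swap j k with hτ
  -- conjugation by τ is realized by swapping the pairs
  have hτh : τ * h * τ⁻¹ = h⁻¹ := by
    rw [hτ, Equiv.swap_inv]
    exact swap_conj_threeCycle hh hjk hjs hks
  have hτhinv : τ * h⁻¹ * τ⁻¹ = h := by
    have : (τ * h * τ⁻¹)⁻¹ = h⁻¹⁻¹ := by rw [hτh]
    simpa [mul_assoc] using this
  have hmapτ : L.map (fun x => τ * x * τ⁻¹) = (List.replicate u [h⁻¹, h]).flatten ++ g' := by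
    rw [hL, List.map_append, List.map_flatten, List.map_replicate]
    congr 1
    · congr 1
      congr 1
      simp only [List.map_cons, List.map_nil, hτh, hτhinv]
    · refine (List.map_congr_left fun σ hσ => ?_).trans (List.map_id g')
      obtain ⟨hjσ, hkσ⟩ := havoid σ hσ
      rw [hτ, Equiv.swap_inv]
      exact swap_conj_of_not_mem_support hjσ hkσ
  have hτequiv : BraidEquiv L (L.map (fun x => τ * x * τ⁻¹)) := by
    rw [hmapτ]
    exact braidEquiv_pairs_swap u h g'
  -- case on the sign of γ
  rcases Int.units_eq_one_or (Equiv.Perm.sign γ) with hsgn | hsgn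
  · -- γ is even
    have hγmem : γ ∈ Subgroup.closure {σ | σ ∈ L} := by
      rw [hclos]
      exact Equiv.Perm.mem_alternatingGroup.mpr hsgn
    exact braidEquiv_conj_of_mem_closure hprod hγmem
  · -- γ is odd; use γ = (γ * τ) * τ with γ * τ even
    have hγτ : γ * τ ∈ Subgroup.closure {σ | σ ∈ L} := by
      rw [hclos]
      refine Equiv.Perm.mem_alternatingGroup.mpr ?_
      rw [map_mul, hsgn, hτ, Equiv.Perm.sign_swap hjk]
      rfl
    have e1 : BraidEquiv L (L.map (fun x => (γ * τ) * x * (γ * τ)⁻¹)) :=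
      braidEquiv_conj_of_mem_closure hprod hγτ
    have e2 := braidEquiv_conj (γ * τ) hτequiv
    have heq : ((L.map (fun x => τ * x * τ⁻¹)).map (fun x => (γ * τ) * x * (γ * τ)⁻¹)) =
        L.map (fun x => γ * x * γ⁻¹) := by
      rw [List.map_map]
      refine List.map_congr_left fun x _ => ?_
      simp only [Function.comp_apply, hτ, Equiv.swap_inv, mul_inv_rev, mul_assoc,
        Equiv.swap_mul_self_mul]
    rw [heq] at e2
    exact Relation.EqvGen.trans _ _ _ e1 e2
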